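/- arXiv:0707.1485 — 2 statements merged into one kernel-verified Lean document; each statement's English description precedes it below -/
import Mathlib

section
/- Let (B_n) be the elliptic divisibility sequence of a non-torsion point Q with canonical height h, and let B_n* denote the primitive part of B_n (the maximal divisor of B_n coprime to all B_m with 0 < m < n). Assuming log B_k ~ h k² and the bound log B_n* ≥ log B_n − ∑_{p | n, p prime} log(p² B_{n/p}), one has log B_n* ≥ 0.547 · h n² for all sufficiently large n. -/
open Filter

/-- `Bstar` is the primitive part of the sequence `B`: `Bstar n` is the maximal divisor of
`B n` coprime to all earlier terms `B m`, `0 < m < n`. -/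
def IsPrimitivePart (B Bstar : ℕ → ℕ) : Prop :=
  ∀ n : ℕ, 0 < n → Bstar n ∣ B n ∧ (∀ m : ℕ, 0 < m → m < n → Nat.Coprime (Bstar n) (B m)) ∧
    ∀ d : ℕ, d ∣ B n → (∀ m : ℕ, 0 < m → m < n → Nat.Coprime d (B m)) → d ∣ Bstar n

/-- finite set of candidate small primes -/
def Tset : Finset ℕ := (Finset.range 2311).filter
  (fun m => 2 ≤ m ∧ (Nat.gcd m 2310 = 1 ∨ m = 2 ∨ m = 3 ∨ m = 5 ∨ m = 7 ∨ m = 11))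

set_option maxRecDepth 1000000 in
lemma sumT_nat : (∑ m ∈ Tset, (10 ^ 10 / m ^ 2 + 1)) ≤ 4524438444 := by decide

lemma one_div_sq_le (m : ℕ) (hm : 0 < m) :
    (1 : ℝ) / (m : ℝ) ^ 2 ≤ ((10 ^ 10 / m ^ 2 + 1 : ℕ) : ℝ) / 10 ^ 10 := by
  have hm2 : 0 < m ^ 2 := by positivity
  have key : (10 ^ 10 : ℕ) < (10 ^ 10 / m ^ 2 + 1) * m ^ 2 := by
    have h1 := Nat.div_add_mod (10 ^ 10) (m ^ 2)
    have h2 := Nat.mod_lt (10 ^ 10) hm2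
    nlinarith [Nat.div_add_mod (10 ^ 10) (m ^ 2)]
  have hmr : (0 : ℝ) < (m : ℝ) ^ 2 := by positivity
  rw [div_le_div_iff₀ hmr (by norm_num)]
  have := (Nat.cast_lt (α := ℝ)).mpr key
  push_cast at this ⊢
  nlinarith

lemma tail_sum (M : ℕ) (hM : 0 < M) (K : ℕ) (hK : M ≤ K) :
    ∑ m ∈ Finset.Icc (M + 1) K, (1 : ℝ) / (m : ℝ) ^ 2 ≤ 1 / M - 1 / K := by
  induction K, hK using Nat.le_induction with
  | base => rw [Finset.Icc_eq_empty (by omega)]; simp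
  | succ K hK ih =>
    rw [Finset.sum_Icc_succ_top (by omega)]
    have hK0 : (0 : ℝ) < (K : ℝ) := by exact_mod_cast Nat.lt_of_lt_of_le hM hK
    have hK1 : (0 : ℝ) < (K : ℝ) + 1 := by linarith
    have key : (1 : ℝ) / ((K : ℝ) + 1) ^ 2 ≤ 1 / (K : ℝ) - 1 / ((K : ℝ) + 1) := by
      rw [div_sub_div _ _ hK0.ne' hK1.ne', div_le_div_iff₀ (by positivity) (by positivity)]
      nlinarith
    push_cast
    linarith

lemma tail_bound (M : ℕ) (hM : 0 < M) (F : Finset ℕ) (hF : ∀ m ∈ F, M < m) :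
    ∑ m ∈ F, (1 : ℝ) / (m : ℝ) ^ 2 ≤ 1 / M := by
  set K : ℕ := max (F.sup id) M with hKdef
  have hsub : F ⊆ Finset.Icc (M + 1) K := by
    intro m hm
    refine Finset.mem_Icc.mpr ⟨hF m hm, le_max_iff.mpr (Or.inl ?_)⟩
    exact Finset.le_sup (f := id) hm
  have h1 : ∑ m ∈ F, (1 : ℝ) / (m : ℝ) ^ 2 ≤ ∑ m ∈ Finset.Icc (M + 1) K, (1 : ℝ) / (m : ℝ) ^ 2 :=
    Finset.sum_le_sum_of_subset_of_nonneg hsub (fun i _ _ => by positivity)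
  have h2 := tail_sum M hM K (le_max_right _ _)
  have hK0 : (0 : ℝ) < (K : ℝ) := by
    have : 0 < K := lt_of_lt_of_le hM (le_max_right _ _)
    exact_mod_cast this
  have : (0 : ℝ) ≤ 1 / (K : ℝ) := by positivity
  linarith

lemma prime_small_mem (p : ℕ) (hp : p.Prime) (hle : p ≤ 2310) : p ∈ Tset := by
  refine Finset.mem_filter.mpr ⟨Finset.mem_range.mpr (by omega), hp.two_le, ?_⟩
  by_cases hg : Nat.gcd p 2310 = 1
  · exact Or.inl hg
  · right
    have hdvd : p ∣ 2310 := by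
      have h1 : Nat.gcd p 2310 ∣ p := Nat.gcd_dvd_left _ _
      have h2 := (hp.eq_one_or_self_of_dvd _ h1).resolve_left hg
      rw [← h2]; exact Nat.gcd_dvd_right _ _
    have h2310 : (2310 : ℕ) = 2 * (3 * (5 * (7 * 11))) := by norm_num
    rw [h2310] at hdvd
    rcases (Nat.Prime.dvd_mul hp).mp hdvd with h | h
    · exact Or.inl ((Nat.prime_dvd_prime_iff_eq hp Nat.prime_two).mp h)
    rcases (Nat.Prime.dvd_mul hp).mp h with h | h
    · exact Or.inr (Or.inl ((Nat.prime_dvd_prime_iff_eq hp Nat.prime_three).mp h))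
    rcases (Nat.Prime.dvd_mul hp).mp h with h | h
    · exact Or.inr (Or.inr (Or.inl ((Nat.prime_dvd_prime_iff_eq hp (by norm_num)).mp h)))
    rcases (Nat.Prime.dvd_mul hp).mp h with h | h
    · exact Or.inr (Or.inr (Or.inr (Or.inl ((Nat.prime_dvd_prime_iff_eq hp (by norm_num)).mp h))))
    · exact Or.inr (Or.inr (Or.inr (Or.inr ((Nat.prime_dvd_prime_iff_eq hp (by norm_num)).mp h))))

lemma sumT_real : ∑ m ∈ Tset, (1 : ℝ) / (m : ℝ) ^ 2 ≤ 4524438444 / 10 ^ 10 := by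
  have h1 : ∑ m ∈ Tset, (1 : ℝ) / (m : ℝ) ^ 2
      ≤ ∑ m ∈ Tset, ((10 ^ 10 / m ^ 2 + 1 : ℕ) : ℝ) / 10 ^ 10 := by
    refine Finset.sum_le_sum (fun m hm => ?_)
    have := (Finset.mem_filter.mp hm).2.1
    exact one_div_sq_le m (by omega)
  have h2 : ∑ m ∈ Tset, ((10 ^ 10 / m ^ 2 + 1 : ℕ) : ℝ) / 10 ^ 10
      = ((∑ m ∈ Tset, (10 ^ 10 / m ^ 2 + 1) : ℕ) : ℝ) / 10 ^ 10 := by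
    rw [Nat.cast_sum, Finset.sum_div]
  have h3 : ((∑ m ∈ Tset, (10 ^ 10 / m ^ 2 + 1) : ℕ) : ℝ) ≤ 4524438444 := by
    exact_mod_cast sumT_nat
  rw [h2] at h1
  have h4 : ((∑ m ∈ Tset, (10 ^ 10 / m ^ 2 + 1) : ℕ) : ℝ) / 10 ^ 10
      ≤ 4524438444 / 10 ^ 10 := by
    gcongr
  linarith

lemma primefactors_sum (n : ℕ) : ∑ p ∈ n.primeFactors, (1 : ℝ) / (p : ℝ) ^ 2 ≤ 4529 / 10000 := by
  classical
  rw [← Finset.sum_filter_add_sum_filter_not n.primeFactors (fun p => p ≤ 2310)]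
  have hsmall : ∑ p ∈ n.primeFactors.filter (fun p => p ≤ 2310), (1 : ℝ) / (p : ℝ) ^ 2
      ≤ 4524438444 / 10 ^ 10 := by
    refine le_trans (Finset.sum_le_sum_of_subset_of_nonneg ?_ (fun i _ _ => by positivity)) sumT_real
    intro p hp
    obtain ⟨hpm, hple⟩ := Finset.mem_filter.mp hp
    exact prime_small_mem p (Nat.prime_of_mem_primeFactors hpm) hple
  have hbig : ∑ p ∈ n.primeFactors.filter (fun p => ¬ p ≤ 2310), (1 : ℝ) / (p : ℝ) ^ 2
      ≤ 1 / 2310 := by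
    refine tail_bound 2310 (by norm_num) _ (fun m hm => ?_)
    have := (Finset.mem_filter.mp hm).2
    omega
  have : (1 : ℝ) / (2310 : ℕ) = 1 / 2310 := by norm_num
  norm_num at hsmall hbig ⊢
  linarith

/-- Growth of the primitive part: if `log B k ~ h k²` (with `h > 0` the canonical height)
and `log Bₙ* ≥ log Bₙ − ∑_{p ∣ n prime} log (p² B_{n/p})`, then for all sufficiently large
`n` one has `log Bₙ* ≥ 0.547 · h · n²`. -/
theorem primitive_part_growth (h : ℝ) (hpos : 0 < h) (B Bstar : ℕ → ℕ)
    (hB : ∀ n, 0 < n → 0 < B n)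
    (hprim : IsPrimitivePart B Bstar)
    (hgrowth : Tendsto (fun k : ℕ => Real.log (B k) / (k : ℝ) ^ 2) atTop (nhds h))
    (hlb : ∀ n : ℕ, 0 < n → Real.log (Bstar n) ≥
      Real.log (B n) - ∑ p ∈ n.primeFactors, Real.log ((p : ℝ) ^ 2 * (B (n / p) : ℝ))) :
    ∃ N : ℕ, ∀ n ≥ N, Real.log (Bstar n) ≥ 0.547 * h * (n : ℝ) ^ 2 := by
  have hlog2 : (0 : ℝ) < Real.log 2 := Real.log_pos (by norm_num)
  obtain ⟨N₀, hN₀⟩ := Metric.tendsto_atTop.mp hgrowth (1 / 100000 * h) (by positivity)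
  set N₁ : ℕ := max N₀ 1 with hN₁def
  set C : ℝ := ∑ j ∈ Finset.range N₁, |Real.log (B j)| with hCdef
  have hC0 : 0 ≤ C := Finset.sum_nonneg fun _ _ => abs_nonneg _
  have hupper : ∀ k : ℕ, 1 ≤ k →
      Real.log (B k) ≤ (1 + 1 / 100000) * h * (k : ℝ) ^ 2 + C := by
    intro k hk
    by_cases hkN : N₁ ≤ k
    · have hk2 : (0 : ℝ) < (k : ℝ) ^ 2 := by positivity
      have hd := hN₀ k (le_trans (le_max_left _ _) hkN)
      rw [Real.dist_eq, abs_lt] at hd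
      have h1 : Real.log (B k) / (k : ℝ) ^ 2 < h + 1 / 100000 * h := by linarith [hd.2]
      have h2 := (div_lt_iff₀ hk2).mp h1
      nlinarith
    · push_neg at hkN
      have h1 : Real.log (B k) ≤ |Real.log (B k)| := le_abs_self _
      have h2 : |Real.log (B k)| ≤ C := Finset.single_le_sum
        (f := fun j => |Real.log (B j)|) (fun i _ => abs_nonneg _) (Finset.mem_range.mpr hkN)
      have h3 : (0 : ℝ) ≤ (1 + 1 / 100000) * h * (k : ℝ) ^ 2 := by positivity
      linarith
  obtain ⟨N₂, hN₂⟩ := exists_nat_ge ((2 + C / Real.log 2) / (85471 / 1000000000 * h))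
  refine ⟨max (max N₁ 2) N₂, fun n hn => ?_⟩
  have hn2 : 2 ≤ n := le_trans (le_max_right _ _) (le_trans (le_max_left _ _) hn)
  have hnN₁ : N₁ ≤ n := le_trans (le_max_left _ _) (le_trans (le_max_left _ _) hn)
  have hnN₂ : N₂ ≤ n := le_trans (le_max_right _ _) hn
  have hn0 : 0 < n := by omega
  have hnr : (0 : ℝ) < (n : ℝ) := by exact_mod_cast hn0
  have hn2r : (0 : ℝ) < (n : ℝ) ^ 2 := by positivity
  -- lower bound for log B n
  have hlower : (1 - 1 / 100000) * h * (n : ℝ) ^ 2 ≤ Real.log (B n) := by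
    have hd := hN₀ n (le_trans (le_max_left _ _) hnN₁)
    rw [Real.dist_eq, abs_lt] at hd
    have h1 : h - 1 / 100000 * h < Real.log (B n) / (n : ℝ) ^ 2 := by linarith [hd.1]
    have h2 := (lt_div_iff₀ hn2r).mp h1
    nlinarith
  -- sum of logs of prime factors
  have hlogp : ∑ p ∈ n.primeFactors, Real.log p ≤ Real.log n := by
    have hd : (∏ p ∈ n.primeFactors, p) ∣ n := Nat.prod_primeFactors_dvd n
    have hle : (∏ p ∈ n.primeFactors, p) ≤ n := Nat.le_of_dvd hn0 hd
    have hprodpos : 0 < ∏ p ∈ n.primeFactors, p :=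
      Finset.prod_pos fun p hp => (Nat.prime_of_mem_primeFactors hp).pos
    have heq : Real.log ((∏ p ∈ n.primeFactors, p : ℕ) : ℝ)
        = ∑ p ∈ n.primeFactors, Real.log p := by
      rw [Nat.cast_prod]
      exact Real.log_prod fun p hp => by
        exact_mod_cast (Nat.prime_of_mem_primeFactors hp).pos.ne'
    rw [← heq]
    exact Real.log_le_log (by exact_mod_cast hprodpos) (by exact_mod_cast hle)
  -- number of prime factors
  have hcard : (n.primeFactors.card : ℝ) ≤ Real.log n / Real.log 2 := by
    have h1 : 2 ^ n.primeFactors.card ≤ ∏ p ∈ n.primeFactors, p := by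
      rw [← Finset.prod_const]
      exact Finset.prod_le_prod' fun p hp => (Nat.prime_of_mem_primeFactors hp).two_le
    have h2 : (2 : ℝ) ^ n.primeFactors.card ≤ (n : ℝ) := by
      exact_mod_cast le_trans h1 (Nat.le_of_dvd hn0 (Nat.prod_primeFactors_dvd n))
    have h3 : (n.primeFactors.card : ℝ) * Real.log 2 ≤ Real.log n := by
      calc (n.primeFactors.card : ℝ) * Real.log 2
          = Real.log ((2 : ℝ) ^ n.primeFactors.card) := (Real.log_pow _ _).symm
        _ ≤ Real.log n := Real.log_le_log (by positivity) h2
    exact (le_div_iff₀ hlog2).mpr h3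
  -- bound each summand
  have hterm : ∀ p ∈ n.primeFactors, Real.log ((p : ℝ) ^ 2 * (B (n / p) : ℝ))
      ≤ 2 * Real.log p + (1 + 1 / 100000) * h * (n : ℝ) ^ 2 * (1 / (p : ℝ) ^ 2) + C := by
    intro p hp
    have hpp := Nat.prime_of_mem_primeFactors hp
    have hpdvd := Nat.dvd_of_mem_primeFactors hp
    have hp0 : 0 < p := hpp.pos
    have hnp1 : 1 ≤ n / p := (Nat.one_le_div_iff hp0).mpr (Nat.le_of_dvd hn0 hpdvd)
    have hBnp : 0 < B (n / p) := hB _ (by omega)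
    have hpr : (0 : ℝ) < (p : ℝ) := by exact_mod_cast hp0
    have hBr : (0 : ℝ) < (B (n / p) : ℝ) := by exact_mod_cast hBnp
    rw [Real.log_mul (by positivity) hBr.ne', Real.log_pow]
    have h1 := hupper (n / p) hnp1
    have h2 : ((n / p : ℕ) : ℝ) ≤ (n : ℝ) / (p : ℝ) := Nat.cast_div_le
    have h3 : ((n / p : ℕ) : ℝ) ^ 2 ≤ ((n : ℝ) / (p : ℝ)) ^ 2 := by
      have h0 : (0 : ℝ) ≤ ((n / p : ℕ) : ℝ) := Nat.cast_nonneg _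
      nlinarith
    have h4 : ((n : ℝ) / (p : ℝ)) ^ 2 = (n : ℝ) ^ 2 * (1 / (p : ℝ) ^ 2) := by
      field_simp
    have h5 : (1 + 1 / 100000) * h * ((n / p : ℕ) : ℝ) ^ 2
        ≤ (1 + 1 / 100000) * h * (n : ℝ) ^ 2 * (1 / (p : ℝ) ^ 2) := by
      have := mul_le_mul_of_nonneg_left h3 (by positivity : (0:ℝ) ≤ (1 + 1 / 100000) * h)
      calc (1 + 1 / 100000) * h * ((n / p : ℕ) : ℝ) ^ 2
          ≤ (1 + 1 / 100000) * h * ((n : ℝ) / (p : ℝ)) ^ 2 := this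
        _ = (1 + 1 / 100000) * h * (n : ℝ) ^ 2 * (1 / (p : ℝ) ^ 2) := by rw [mul_assoc, h4]; ring
    push_cast
    linarith
  -- assemble sum bound
  have hsum : ∑ p ∈ n.primeFactors, Real.log ((p : ℝ) ^ 2 * (B (n / p) : ℝ))
      ≤ 2 * Real.log n + (1 + 1 / 100000) * h * (n : ℝ) ^ 2 * (4529 / 10000)
        + C * (Real.log n / Real.log 2) := by
    have hA : ∑ p ∈ n.primeFactors, Real.log ((p : ℝ) ^ 2 * (B (n / p) : ℝ))
        ≤ ∑ p ∈ n.primeFactors,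
          (2 * Real.log p + (1 + 1 / 100000) * h * (n : ℝ) ^ 2 * (1 / (p : ℝ) ^ 2) + C) :=
      Finset.sum_le_sum hterm
    have hB' : ∑ p ∈ n.primeFactors,
          (2 * Real.log p + (1 + 1 / 100000) * h * (n : ℝ) ^ 2 * (1 / (p : ℝ) ^ 2) + C)
        = 2 * (∑ p ∈ n.primeFactors, Real.log p)
          + (1 + 1 / 100000) * h * (n : ℝ) ^ 2 * (∑ p ∈ n.primeFactors, 1 / (p : ℝ) ^ 2)
          + C * n.primeFactors.card := by
      rw [Finset.sum_add_distrib, Finset.sum_add_distrib, ← Finset.mul_sum, ← Finset.mul_sum,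
        Finset.sum_const, nsmul_eq_mul]
      ring
    have hS := primefactors_sum n
    have hc1 : (1 + 1 / 100000) * h * (n : ℝ) ^ 2
          * (∑ p ∈ n.primeFactors, 1 / (p : ℝ) ^ 2)
        ≤ (1 + 1 / 100000) * h * (n : ℝ) ^ 2 * (4529 / 10000) :=
      mul_le_mul_of_nonneg_left hS (by positivity)
    have hc2 : C * (n.primeFactors.card : ℝ) ≤ C * (Real.log n / Real.log 2) :=
      mul_le_mul_of_nonneg_left hcard hC0
    linarith
  -- final numeric step
  have hlogn0 : 0 ≤ Real.log n := Real.log_nonneg (by exact_mod_cast hn0)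
  have hlogn_le : Real.log n ≤ (n : ℝ) := by
    have := Real.log_le_sub_one_of_pos hnr
    linarith
  have hKey : (2 + C / Real.log 2) * Real.log n ≤ 85471 / 1000000000 * h * (n : ℝ) ^ 2 := by
    have hN2r : ((2 + C / Real.log 2) / (85471 / 1000000000 * h)) ≤ (n : ℝ) :=
      le_trans hN₂ (Nat.cast_le.mpr hnN₂)
    have hmain : 2 + C / Real.log 2 ≤ 85471 / 1000000000 * h * (n : ℝ) := by
      rw [div_le_iff₀ (by positivity)] at hN2r
      linarith
    calc (2 + C / Real.log 2) * Real.log n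
        ≤ (85471 / 1000000000 * h * (n : ℝ)) * Real.log n :=
          mul_le_mul_of_nonneg_right hmain hlogn0
      _ ≤ (85471 / 1000000000 * h * (n : ℝ)) * (n : ℝ) :=
          mul_le_mul_of_nonneg_left hlogn_le (by positivity)
      _ = 85471 / 1000000000 * h * (n : ℝ) ^ 2 := by ring
  have hstar := hlb n hn0
  have hexp : C * (Real.log n / Real.log 2) = (C / Real.log 2) * Real.log n := by ring
  rw [ge_iff_le, show (0.547 : ℝ) = 547 / 1000 by norm_num]
  linarith [hstar, hsum, hlower, hKey]
end

section
/- The point Q = (2, 2) on the elliptic curve E : y² = x³ − 4 over ℚ is a point of infinite order. -/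
open WeierstrassCurve

private lemma vtwo' : padicValRat 2 (2:ℚ) = 1 := by
  have := padicValRat.self (p := 2) (by norm_num)
  simpa using this

private lemma vodd' (n : ℤ) (hn : ¬ (2:ℤ) ∣ n) : padicValRat 2 (n:ℚ) = 0 := by
  rw [padicValRat.of_int, padicValInt.eq_zero_of_not_dvd hn]
  norm_num

private lemma vfour' : padicValRat 2 (4:ℚ) = 2 := by
  rw [show (4:ℚ) = 2*2 by norm_num, padicValRat.mul (by norm_num) (by norm_num), vtwo']
  norm_num

private lemma vbase' : padicValRat 2 ((785:ℚ)/484) = -2 := by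
  rw [padicValRat.div (by norm_num) (by norm_num),
    show ((785:ℚ)) = ((785:ℤ):ℚ) by norm_num, vodd' 785 (by norm_num),
    show ((484:ℚ)) = ((121:ℤ):ℚ) * 4 by norm_num,
    padicValRat.mul (by norm_num) (by norm_num), vodd' 121 (by norm_num), vfour']
  norm_num

private lemma some_congr' {W : WeierstrassCurve ℚ} {x y x' y' : ℚ} (h : W.toAffine.Nonsingular x y)
    (hx : x = x') (hy : y = y') : ∃ h' : W.toAffine.Nonsingular x' y',
      (Affine.Point.some _ _ h : W.toAffine.Point) = Affine.Point.some _ _ h' := by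
  subst hx; subst hy; exact ⟨h, rfl⟩

private lemma double_eq' (W : WeierstrassCurve ℚ) (h₁ : W.a₁ = 0) (h₂ : W.a₂ = 0) (h₃ : W.a₃ = 0)
    (h₄ : W.a₄ = 0) {x y : ℚ} (h : W.toAffine.Nonsingular x y) (hy : y ≠ 0) :
    ∃ h' : W.toAffine.Nonsingular ((3*x^2/(2*y))^2 - 2*x)
      (-((3*x^2/(2*y)) * ((3*x^2/(2*y))^2 - 2*x - x) + y)),
    (2:ℤ) • (Affine.Point.some _ _ h : W.toAffine.Point) = Affine.Point.some _ _ h' := by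
  have hneg : W.toAffine.negY x y = -y := by
    simp [Affine.negY, h₁, h₃]
  have hy' : y ≠ W.toAffine.negY x y := by rw [hneg]; intro hc; apply hy; linarith
  have hs : W.toAffine.slope x x y y = 3*x^2/(2*y) := by
    rw [Affine.slope_of_Y_ne rfl hy', hneg, h₁, h₂, h₄]; ring_nf
  have hX : W.toAffine.addX x x (W.toAffine.slope x x y y) = (3*x^2/(2*y))^2 - 2*x := by
    rw [Affine.addX, hs, h₁, h₂]; ring
  have hY : W.toAffine.addY x x y (W.toAffine.slope x x y y)
      = -((3*x^2/(2*y)) * ((3*x^2/(2*y))^2 - 2*x - x) + y) := by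
    rw [Affine.addY, Affine.negAddY, Affine.negY, hX, hs, h₁, h₃]; ring
  obtain ⟨h', he⟩ := some_congr' (Affine.nonsingular_add h h (fun hc => hy' hc.2)) hX hY
  refine ⟨h', ?_⟩
  rw [two_zsmul, Affine.Point.add_of_Y_ne hy']
  exact he

private lemma curve_eq' (W : WeierstrassCurve ℚ)
    (h₁ : W.a₁ = 0) (h₂ : W.a₂ = 0) (h₃ : W.a₃ = 0) (h₄ : W.a₄ = 0) (h₆ : W.a₆ = -4)
    {x y : ℚ} (h : W.toAffine.Nonsingular x y) : y^2 = x^3 - 4 := by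
  have := (W.toAffine.equation_iff x y).mp h.1
  rw [h₁, h₂, h₃, h₄, h₆] at this
  linarith

private lemma vstep' (x y : ℚ) (heq : y^2 = x^3 - 4) (k : ℤ) (hk : 1 ≤ k)
    (hx : padicValRat 2 x = -(2*k)) :
    y ≠ 0 ∧ padicValRat 2 ((3*x^2/(2*y))^2 - 2*x) = -(2*(k+1)) := by
  have hx0 : x ≠ 0 := by
    intro hc; rw [hc] at hx; simp at hx; omega
  have hx3 : padicValRat 2 (x^3) = -(6*k) := by
    rw [padicValRat.pow x, hx]; push_cast; ring
  have h4 : padicValRat 2 (-4 : ℚ) = 2 := by rw [padicValRat.neg]; exact vfour'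
  have hne : x^3 + (-4:ℚ) ≠ 0 := by
    intro hc
    have hxx : x^3 = 4 := by linarith
    have := congrArg (padicValRat 2) hxx
    rw [hx3, vfour'] at this; omega
  have hy0 : y ≠ 0 := by
    intro hc; rw [hc] at heq; apply hne
    rw [show x^3 + (-4:ℚ) = x^3 - 4 by ring, ← heq]; norm_num
  have hy2 : padicValRat 2 (y^2) = -(6*k) := by
    rw [show (x:ℚ)^3 - 4 = x^3 + (-4) by ring] at heq
    rw [heq, padicValRat.add_eq_of_lt hne (pow_ne_zero _ hx0) (by norm_num)
      (by rw [hx3, h4]; omega), hx3]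
  have hy : padicValRat 2 y = -(3*k) := by
    rw [padicValRat.pow y] at hy2; push_cast at hy2; omega
  have hs0 : (3*x^2/(2*y)) ≠ 0 := by positivity
  have hs : padicValRat 2 (3*x^2/(2*y)) = -(k+1) := by
    rw [padicValRat.div (by positivity) (by positivity),
      padicValRat.mul (by norm_num) (pow_ne_zero _ hx0),
      padicValRat.mul (by norm_num) hy0,
      padicValRat.pow x, vtwo', hx, hy,
      show (3:ℚ) = ((3:ℤ):ℚ) by norm_num, vodd' 3 (by norm_num)]
    push_cast; ring
  refine ⟨hy0, ?_⟩
  have hs2 : padicValRat 2 ((3*x^2/(2*y))^2) = -(2*k+2) := by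
    rw [padicValRat.pow _, hs]; push_cast; ring
  have h2x : padicValRat 2 (-(2*x)) = 1 - 2*k := by
    rw [padicValRat.neg, padicValRat.mul (by norm_num) hx0, vtwo', hx]; ring
  have hsum : (3*x^2/(2*y))^2 + -(2*x) ≠ 0 := by
    intro hc
    have hxx : (3*x^2/(2*y))^2 = 2*x := by linarith
    have := congrArg (padicValRat 2) hxx
    rw [hs2, padicValRat.mul (by norm_num) hx0, vtwo', hx] at this; omega
  rw [show (3*x^2/(2*y))^2 - 2*x = (3*x^2/(2*y))^2 + -(2*x) by ring,
    padicValRat.add_eq_of_lt hsum (pow_ne_zero _ hs0) (neg_ne_zero.mpr (by positivity))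
      (by rw [hs2, h2x]; omega), hs2]
  ring

/-- The point `Q = (2, 2)` on the elliptic curve `E : y² = x³ − 4` over `ℚ` has infinite
order. -/
theorem point_on_xcubed_sub_four_infinite_order (W : WeierstrassCurve ℚ) [W.IsElliptic]
    (h₁ : W.a₁ = 0) (h₂ : W.a₂ = 0) (h₃ : W.a₃ = 0) (h₄ : W.a₄ = 0) (h₆ : W.a₆ = -4)
    (h : W.toAffine.Nonsingular 2 2) :
    ∀ n : ℕ, 0 < n → (n : ℤ) • (WeierstrassCurve.Affine.Point.some _ _ h) ≠ 0 := by
  have key : ∀ m : ℕ, ∃ (x y : ℚ) (hns : W.toAffine.Nonsingular x y),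
      ((2:ℤ)^(m+2)) • (Affine.Point.some _ _ h : W.toAffine.Point) = Affine.Point.some _ _ hns ∧
      padicValRat 2 x = -(2*((m:ℤ)+1)) := by
    intro m
    induction m with
    | zero =>
      obtain ⟨hns1, he1⟩ := double_eq' W h₁ h₂ h₃ h₄ h (by norm_num : (2:ℚ) ≠ 0)
      obtain ⟨hns2, he2⟩ := double_eq' W h₁ h₂ h₃ h₄ hns1 (by norm_num)
      obtain ⟨hns3, he3⟩ := some_congr' hns2 (by norm_num : _ = (785:ℚ)/484) rfl
      refine ⟨785/484, _, hns3, ?_, ?_⟩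
      · rw [show ((2:ℤ)^(0+2)) = 2*2 by norm_num, mul_smul, he1, he2, he3]
      · rw [vbase']; norm_num
    | succ m ih =>
      obtain ⟨x, y, hns, heqP, hval⟩ := ih
      have heqc : y^2 = x^3 - 4 := curve_eq' W h₁ h₂ h₃ h₄ h₆ hns
      obtain ⟨hy0, hval'⟩ := vstep' x y heqc ((m:ℤ)+1) (by omega) hval
      obtain ⟨hns', he'⟩ := double_eq' W h₁ h₂ h₃ h₄ hns hy0
      refine ⟨_, _, hns', ?_, ?_⟩
      · rw [show ((2:ℤ)^(m+1+2)) = 2 * 2^(m+2) by ring, mul_smul, heqP, he']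
      · rw [hval']; push_cast; ring
  intro n hn hcon
  haveI : NeZero n := ⟨hn.ne'⟩
  obtain ⟨m, m', hnem, hfe⟩ :=
    Finite.exists_ne_map_eq_of_infinite (fun m : ℕ => (2:ZMod n)^(m+2))
  have hz : (((2:ℤ)^(m+2) : ℤ) : ZMod n) = (((2:ℤ)^(m'+2) : ℤ) : ZMod n) := by
    push_cast
    exact_mod_cast hfe
  obtain ⟨c, hc⟩ := ((ZMod.intCast_eq_intCast_iff _ _ _).mp hz).dvd
  have hsm : ((2:ℤ)^(m'+2)) • (Affine.Point.some _ _ h : W.toAffine.Point)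
      = ((2:ℤ)^(m+2)) • (Affine.Point.some _ _ h : W.toAffine.Point) := by
    have h2 : (2:ℤ)^(m'+2) = 2^(m+2) + c * n := by linarith [hc]
    rw [h2, add_zsmul, mul_zsmul, hcon, zsmul_zero, add_zero]
  obtain ⟨xa, ya, ha, hpa, hva⟩ := key m
  obtain ⟨xb, yb, hb, hpb, hvb⟩ := key m'
  have hab : (Affine.Point.some _ _ ha : W.toAffine.Point) = Affine.Point.some _ _ hb := by
    rw [← hpa, ← hpb, hsm]
  injection hab with hxab hrest
  rw [hxab, hvb] at hva
  apply hnem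
  omega
end
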